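/- Let X₁, X₂ be independent standard normal random variables and α ∈ (0, 1/2). For parameters (μ₁, μ₂) with μ₁ > 0 and μ₂ > 0 (interior of the null hypothesis), the rejection probability of the recommended test, P((μ₁+X₁)(μ₂+X₂) < 0 and min(|μ₁+X₁|, |μ₂+X₂|) > Φ⁻¹(1−α)), is strictly less than α. -/

import Mathlib

open MeasureTheory ProbabilityTheory

/-- The standard normal distribution on ℝ. -/
noncomputable def stdGauss : Measure ℝ := gaussianReal 0 1

/-- Φ, the standard normal CDF. -/
noncomputable def Φ : ℝ → ℝ := fun x => cdf stdGauss x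

/-- The joint law of two independent standard normals. -/
noncomputable def P2 : Measure (ℝ × ℝ) := stdGauss.prod stdGauss

open Real Set

instance : IsProbabilityMeasure stdGauss := by rw [stdGauss]; infer_instance


lemma Phi_eq_integral (a : ℝ) : Φ a = ∫ x in Iic a, gaussianPDFReal 0 1 x := by
  rw [Φ, cdf_eq_real, measureReal_def, stdGauss, gaussianReal_apply_eq_integral _ one_ne_zero,
    ENNReal.toReal_ofReal]
  exact integral_nonneg fun x => gaussianPDFReal_nonneg _ _ _

lemma Phi_shift (a t : ℝ) : Φ (a - t) = ∫ x in Iic a, gaussianPDFReal t 1 x := by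
  have h : (gaussianReal t 1) (Iic a) = stdGauss (Iic (a - t)) := by
    have := gaussianReal_map_add_const (μ := 0) (v := 1) t
    rw [zero_add] at this
    rw [stdGauss, ← this, Measure.map_apply (by fun_prop) measurableSet_Iic]
    congr 1
    ext x
    simp [sub_eq_iff_eq_add, le_sub_iff_add_le]
  rw [Φ, cdf_eq_real, measureReal_def, ← h, gaussianReal_apply_eq_integral _ one_ne_zero,
    ENNReal.toReal_ofReal]
  exact integral_nonneg fun x => gaussianPDFReal_nonneg _ _ _

lemma stdGauss_singleton (a : ℝ) : stdGauss {a} = 0 := by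
  rw [stdGauss]
  exact gaussianReal_absolutelyContinuous 0 one_ne_zero (volume_singleton)

lemma stdGauss_Iio (a : ℝ) : stdGauss (Iio a) = ENNReal.ofReal (Φ a) := by
  rw [Φ, ofReal_cdf, measure_congr (Iio_ae_eq_Iic' (stdGauss_singleton a))]

lemma stdGauss_Iic (a : ℝ) : stdGauss (Iic a) = ENNReal.ofReal (Φ a) := by
  rw [Φ, ofReal_cdf]

lemma stdGauss_Ioi (a : ℝ) : stdGauss (Ioi a) = ENNReal.ofReal (1 - Φ a) := by
  have h := measure_compl (measurableSet_Iic (a := a)) (measure_ne_top stdGauss _)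
  rw [compl_Iic, stdGauss_Iic] at h
  rw [h, measure_univ, ENNReal.ofReal_sub 1 (show (0:ℝ) ≤ Φ a from cdf_nonneg _ _), ENNReal.ofReal_one]

lemma Phi_neg (x : ℝ) : Φ (-x) = 1 - Φ x := by
  have hmap : stdGauss.map (fun y => (-1 : ℝ) * y) = stdGauss := by
    rw [stdGauss]
    have := gaussianReal_map_const_mul (μ := 0) (v := 1) (-1)
    simpa using this
  have h1 : stdGauss (Iic (-x)) = stdGauss (Ici x) := by
    conv_lhs => rw [← hmap]
    rw [Measure.map_apply (by fun_prop) measurableSet_Iic]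
    congr 1
    ext y
    simp [neg_le]
  have h2 : stdGauss (Ici x) = stdGauss (Ioi x) :=
    (measure_congr (Ioi_ae_eq_Ici' (stdGauss_singleton x))).symm
  have this2 := stdGauss_Iic (-x)
  rw [h1, h2, stdGauss_Ioi] at this2
  have h3 : (0:ℝ) ≤ 1 - Φ x := sub_nonneg.2 (cdf_le_one _ _)
  have h4 : (0:ℝ) ≤ Φ (-x) := cdf_nonneg _ _
  exact ((ENNReal.ofReal_eq_ofReal_iff h3 h4).mp this2).symm

lemma integral_pdf_pos (t : ℝ) {s : Set ℝ} (hs : MeasurableSet s) (h : 0 < volume s) :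
    0 < ∫ x in s, gaussianPDFReal t 1 x := by
  rw [setIntegral_pos_iff_support_of_nonneg_ae
    (ae_of_all _ fun x => gaussianPDFReal_nonneg _ _ _)
    (integrable_gaussianPDFReal t 1).integrableOn]
  have : Function.support (gaussianPDFReal t 1) = univ := by
    ext x; simp [Function.mem_support, ne_of_gt (gaussianPDFReal_pos t 1 x one_ne_zero)]
  rwa [this, univ_inter]

lemma Phi_diff (t : ℝ) {a b : ℝ} (hab : a ≤ b) :
    Φ (b - t) - Φ (a - t) = ∫ x in Ioc a b, gaussianPDFReal t 1 x := by
  rw [Phi_shift, Phi_shift,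
    intervalIntegral.integral_Iic_sub_Iic (integrable_gaussianPDFReal t 1).integrableOn
      (integrable_gaussianPDFReal t 1).integrableOn,
    intervalIntegral.integral_of_le hab]

lemma Phi_strictMono {a b : ℝ} (hab : a < b) : Φ a < Φ b := by
  have h := Phi_diff 0 hab.le
  simp only [sub_zero] at h
  have := integral_pdf_pos 0 (s := Ioc a b) measurableSet_Ioc
    (by rw [Real.volume_Ioc]; exact ENNReal.ofReal_pos.2 (by linarith))
  linarith

lemma Phi_pos (a : ℝ) : 0 < Φ a := by
  have h := Phi_strictMono (show a - 1 < a by linarith)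
  have := cdf_nonneg (μ := stdGauss) (a - 1)
  have heq : cdf stdGauss (a-1) = Φ (a-1) := rfl
  linarith [heq ▸ this]

lemma Phi_lt_one (a : ℝ) : Φ a < 1 := by
  have h := Phi_strictMono (show a < a + 1 by linarith)
  have := cdf_le_one (μ := stdGauss) (a + 1)
  have heq : cdf stdGauss (a+1) = Φ (a+1) := rfl
  linarith [heq ▸ this]

lemma pdf_ratio (t y : ℝ) :
    gaussianPDFReal t 1 y = Real.exp (y*t - t^2/2) * gaussianPDFReal 0 1 y := by
  simp only [gaussianPDFReal, NNReal.coe_one, mul_one, sub_zero]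
  rw [mul_comm (Real.exp _), mul_assoc, ← Real.exp_add]
  ring_nf

lemma mlr {c t : ℝ} (hc : 0 ≤ c) (ht : 0 ≤ t) :
    Φ (-c - t) * Φ c ≤ Φ (-c) * Φ (c - t) := by
  set K := Real.exp (-c*t - t^2/2) with hK
  have hA : Φ (-c - t) ≤ K * Φ (-c) := by
    rw [Phi_shift (-c) t, Phi_eq_integral, ← integral_const_mul]
    refine setIntegral_mono_on (integrable_gaussianPDFReal t 1).integrableOn
      ((integrable_gaussianPDFReal 0 1).integrableOn.const_mul K) measurableSet_Iic ?_
    intro y hy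
    rw [pdf_ratio, hK]
    exact mul_le_mul_of_nonneg_right
      (Real.exp_le_exp.2 (by nlinarith [mem_Iic.1 hy]))
      (gaussianPDFReal_nonneg 0 1 y)
  have hB : K * (Φ c - Φ (-c)) ≤ Φ (c - t) - Φ (-c - t) := by
    have h1 : Φ c - Φ (-c) = ∫ x in Ioc (-c) c, gaussianPDFReal 0 1 x := by
      have := Phi_diff 0 (show -c ≤ c by linarith)
      simpa using this
    have h2 : Φ (c - t) - Φ (-c - t) = ∫ x in Ioc (-c) c, gaussianPDFReal t 1 x :=
      Phi_diff t (by linarith)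
    rw [h1, h2, ← integral_const_mul]
    refine setIntegral_mono_on
      (((integrable_gaussianPDFReal 0 1).integrableOn).const_mul K)
      (integrable_gaussianPDFReal t 1).integrableOn measurableSet_Ioc ?_
    intro z hz
    rw [pdf_ratio t z, hK]
    exact mul_le_mul_of_nonneg_right
      (Real.exp_le_exp.2 (by nlinarith [(mem_Ioc.1 hz).1]))
      (gaussianPDFReal_nonneg 0 1 z)
  have p1 : 0 < Φ (-c) := Phi_pos _
  have p2 : 0 ≤ Φ (-c - t) := (Phi_pos _).le
  have p3 : Φ (-c) ≤ Φ c := by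
    rcases eq_or_lt_of_le (show -c ≤ c by linarith) with h | h
    · rw [h]
    · exact (Phi_strictMono h).le
  nlinarith [mul_le_mul_of_nonneg_right hA (sub_nonneg.2 p3),
    mul_le_mul_of_nonneg_left hB p1.le]


/-- In the interior of the null (μ₁, μ₂ > 0), the recommended test's rejection
probability is strictly below α. -/
theorem stmt19 (α c μ₁ μ₂ : ℝ) (hα : α ∈ Set.Ioo (0:ℝ) (1/2)) (hc : Φ c = 1 - α)
    (h₁ : 0 < μ₁) (h₂ : 0 < μ₂) :
    P2 {p : ℝ × ℝ | (μ₁ + p.1) * (μ₂ + p.2) < 0 ∧ c < min |μ₁ + p.1| |μ₂ + p.2|}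
      < ENNReal.ofReal α := by
  obtain ⟨hα0, hα2⟩ := hα
  -- Φ 0 = 1/2 and c > 0
  have hPhi0 : Φ 0 = 1/2 := by have := Phi_neg 0; rw [neg_zero] at this; linarith
  have hc0 : 0 < c := by
    by_contra h
    push_neg at h
    rcases eq_or_lt_of_le h with h | h
    · rw [h] at hc; linarith
    · have := Phi_strictMono h; linarith
  have hPhinegc : Φ (-c) = α := by rw [Phi_neg, hc]; ring
  -- the rejection set
  have hset : {p : ℝ × ℝ | (μ₁ + p.1) * (μ₂ + p.2) < 0 ∧ c < min |μ₁ + p.1| |μ₂ + p.2|}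
      = (Iio (-c - μ₁) ×ˢ Ioi (c - μ₂)) ∪ (Ioi (c - μ₁) ×ˢ Iio (-c - μ₂)) := by
    ext ⟨x, y⟩
    simp only [mem_setOf_eq, mem_union, mem_prod, mem_Iio, mem_Ioi, lt_min_iff]
    constructor
    · rintro ⟨hm, ha, hb⟩
      rcases mul_neg_iff.1 hm with ⟨hp, hn⟩ | ⟨hn, hp⟩
      · right
        rw [abs_of_pos hp] at ha
        rw [abs_of_neg hn] at hb
        exact ⟨by linarith, by linarith⟩
      · left
        rw [abs_of_neg hn] at ha
        rw [abs_of_pos hp] at hb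
        exact ⟨by linarith, by linarith⟩
    · rintro (⟨hx, hy⟩ | ⟨hx, hy⟩)
      · have h1 : μ₁ + x < 0 := by linarith
        have h2 : 0 < μ₂ + y := by linarith
        refine ⟨mul_neg_of_neg_of_pos h1 h2, ?_, ?_⟩
        · rw [abs_of_neg h1]; linarith
        · rw [abs_of_pos h2]; linarith
      · have h1 : 0 < μ₁ + x := by linarith
        have h2 : μ₂ + y < 0 := by linarith
        refine ⟨mul_neg_of_pos_of_neg h1 h2, ?_, ?_⟩
        · rw [abs_of_pos h1]; linarith
        · rw [abs_of_neg h2]; linarith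
  rw [hset]
  have hdisj : Disjoint (Iio (-c - μ₁) ×ˢ Ioi (c - μ₂)) (Ioi (c - μ₁) ×ˢ Iio (-c - μ₂)) := by
    rw [Set.disjoint_left]
    rintro ⟨x, y⟩ ⟨hx, -⟩ ⟨hx', -⟩
    simp only [mem_Iio, mem_Ioi] at hx hx'
    linarith
  rw [P2, measure_union hdisj (measurableSet_Ioi.prod measurableSet_Iio),
    Measure.prod_prod, Measure.prod_prod, stdGauss_Iio, stdGauss_Ioi, stdGauss_Ioi,
    stdGauss_Iio]
  set g1 := Φ (-c - μ₁) with hg1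
  set g2 := Φ (-c - μ₂) with hg2
  set b1 := 1 - Φ (c - μ₁) with hb1
  set b2 := 1 - Φ (c - μ₂) with hb2
  have hg1p : 0 < g1 := Phi_pos _
  have hg2p : 0 < g2 := Phi_pos _
  have hb1a : α < b1 := by
    have := Phi_strictMono (show c - μ₁ < c by linarith); rw [hc] at this
    simp only [hb1]; linarith
  have hb2a : α < b2 := by
    have := Phi_strictMono (show c - μ₂ < c by linarith); rw [hc] at this
    simp only [hb2]; linarith
  have hb1lt : b1 < 1 := by have := Phi_pos (c - μ₁); simp only [hb1]; linarith
  have hb2lt : b2 < 1 := by have := Phi_pos (c - μ₂); simp only [hb2]; linarith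
  have hm1 : g1 * (1 - α) ≤ α * (1 - b1) := by
    have := mlr hc0.le h₁.le
    rw [hPhinegc, hc] at this
    have he : -c - μ₁ = -c - μ₁ := rfl
    simp only [hg1, hb1]; linarith [this]
  have hm2 : g2 * (1 - α) ≤ α * (1 - b2) := by
    have := mlr hc0.le h₂.le
    rw [hPhinegc, hc] at this
    simp only [hg2, hb2]; linarith [this]
  -- the real inequality
  have key : b1 + b2 - 2 * b1 * b2 < 1 - α := by
    rcases le_or_gt b1 (1/2) with h | h
    · nlinarith
    · nlinarith
  have hmain : g1 * b2 + g2 * b1 < α := by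
    have h1 : g1 * b2 * (1 - α) ≤ α * (1 - b1) * b2 := by
      calc g1 * b2 * (1 - α) = g1 * (1 - α) * b2 := by ring
        _ ≤ α * (1 - b1) * b2 := mul_le_mul_of_nonneg_right hm1 (by linarith)
    have h2 : g2 * b1 * (1 - α) ≤ α * (1 - b2) * b1 := by
      calc g2 * b1 * (1 - α) = g2 * (1 - α) * b1 := by ring
        _ ≤ α * (1 - b2) * b1 := mul_le_mul_of_nonneg_right hm2 (by linarith)
    nlinarith [key, h1, h2]
  calc ENNReal.ofReal g1 * ENNReal.ofReal b2 + ENNReal.ofReal b1 * ENNReal.ofReal g2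
      = ENNReal.ofReal (g1 * b2 + g2 * b1) := by
        rw [← ENNReal.ofReal_mul hg1p.le, ← ENNReal.ofReal_mul (by linarith : (0:ℝ) ≤ b1),
          ← ENNReal.ofReal_add (mul_nonneg hg1p.le (by linarith)) (mul_nonneg (by linarith) hg2p.le)]
        ring_nf
    _ < ENNReal.ofReal α := (ENNReal.ofReal_lt_ofReal_iff hα0).2 hmain
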